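/- For all integers m ≥ 0 and n ≥ 0, the number of elements of Q_3(m,n) equals the number of elements of P_3(−m,n). -/

import Mathlib

noncomputable section

/-- The i-th largest part (1-indexed) of a partition, represented as a
multiset of parts; `0` if `i` exceeds the number of parts. -/
def partAt (mu : Multiset ℕ) (i : ℕ) : ℕ :=
  (mu.sort (· ≥ ·)).getD (i - 1) 0

/-- The smallest part of a partition, with the convention that the smallest
part of the empty partition is `+∞`. -/
def sMin (mu : Multiset ℕ) : ℕ∞ := (mu.map ((↑) : ℕ → ℕ∞)).inf

/-- Q₃(m,n): triples (j, α, β) with j ≥ 1, parts of α at most m+j, parts of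
β at most j, |α|+|β|+j(m+j) = n, β₁ = j, ℓ(β) ≥ ℓ(α)+1, α₁ = m+j and
s(β) = 1. -/
def Q3 (m n : ℕ) : Set (ℕ × Multiset ℕ × Multiset ℕ) :=
  {x | 1 ≤ x.1 ∧ (∀ a ∈ x.2.1, 0 < a) ∧ (∀ a ∈ x.2.2, 0 < a) ∧
       (∀ a ∈ x.2.1, a ≤ m + x.1) ∧ (∀ a ∈ x.2.2, a ≤ x.1) ∧
       x.2.1.sum + x.2.2.sum + x.1 * (m + x.1) = n ∧
       partAt x.2.2 1 = x.1 ∧ Multiset.card x.2.1 + 1 ≤ Multiset.card x.2.2 ∧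
       partAt x.2.1 1 = m + x.1 ∧ sMin x.2.2 = 1}

/-- P₃(-m,n): triples (j', γ, δ) with j' ≥ 2, parts of γ at most m+j', parts
of δ at most j', |γ|+|δ|+j'(m+j') = n, ℓ(δ) ≤ ℓ(γ) and δ₁ ≤ j'-2. -/
def P3 (m n : ℕ) : Set (ℕ × Multiset ℕ × Multiset ℕ) :=
  {x | 2 ≤ x.1 ∧ (∀ a ∈ x.2.1, 0 < a) ∧ (∀ a ∈ x.2.2, 0 < a) ∧
       (∀ a ∈ x.2.1, a ≤ m + x.1) ∧ (∀ a ∈ x.2.2, a ≤ x.1) ∧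
       x.2.1.sum + x.2.2.sum + x.1 * (m + x.1) = n ∧
       Multiset.card x.2.2 ≤ Multiset.card x.2.1 ∧
       (partAt x.2.2 1 : ℤ) ≤ (x.1 : ℤ) - 2}

/-! ### Auxiliary lemmas about `partAt` and `sMin` -/

lemma partAt_zero_one : partAt 0 1 = 0 := by
  simp [partAt]

lemma partAt_one_le {μ : Multiset ℕ} {k : ℕ} (h : ∀ a ∈ μ, a ≤ k) : partAt μ 1 ≤ k := by
  unfold partAt
  rcases hL : μ.sort (· ≥ ·) with _ | ⟨a, t⟩
  · simp
  · have ha : a ∈ μ := by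
      rw [← Multiset.mem_sort (· ≥ ·), hL]
      exact List.mem_cons_self
    simpa using h a ha

lemma le_partAt_one {μ : Multiset ℕ} {a : ℕ} (ha : a ∈ μ) : a ≤ partAt μ 1 := by
  unfold partAt
  have hs : (μ.sort (· ≥ ·)).Pairwise (· ≥ ·) := Multiset.pairwise_sort _ _
  have ha' : a ∈ μ.sort (· ≥ ·) := (Multiset.mem_sort _).mpr ha
  rcases hL : μ.sort (· ≥ ·) with _ | ⟨b, t⟩
  · rw [hL] at ha'; simp at ha'
  · rw [hL] at ha' hs
    simp only [show (1 : ℕ) - 1 = 0 from rfl, List.getD_cons_zero]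
    rcases List.mem_cons.mp ha' with h | h
    · omega
    · exact List.rel_of_pairwise_cons hs h

lemma partAt_one_mem {μ : Multiset ℕ} (h : μ ≠ 0) : partAt μ 1 ∈ μ := by
  unfold partAt
  rcases hL : μ.sort (· ≥ ·) with _ | ⟨b, t⟩
  · exfalso
    apply h
    have := Multiset.sort_eq μ (· ≥ ·)
    rw [hL] at this
    simpa using this.symm
  · simp only [show (1 : ℕ) - 1 = 0 from rfl, List.getD_cons_zero]
    rw [← Multiset.mem_sort (· ≥ ·), hL]
    exact List.mem_cons_self

lemma partAt_one_eq {μ : Multiset ℕ} {k : ℕ} (hk : k ∈ μ) (h : ∀ a ∈ μ, a ≤ k) :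
    partAt μ 1 = k :=
  le_antisymm (partAt_one_le h) (le_partAt_one hk)

lemma sMin_eq_one {μ : Multiset ℕ} (h1 : 1 ∈ μ) (hpos : ∀ a ∈ μ, 0 < a) : sMin μ = 1 := by
  apply le_antisymm
  · exact Multiset.inf_le (Multiset.mem_map_of_mem _ h1)
  · rw [sMin]
    refine Multiset.le_inf.mpr fun b hb => ?_
    obtain ⟨a, ha, rfl⟩ := Multiset.mem_map.mp hb
    exact_mod_cast hpos a ha

lemma one_mem_of_sMin_eq_one {μ : Multiset ℕ} (h : sMin μ = 1) : 1 ∈ μ := by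
  induction μ using Multiset.induction with
  | empty =>
      rw [sMin] at h
      simp at h
  | cons a s ih =>
      rw [sMin, Multiset.map_cons, Multiset.inf_cons] at h
      rcases le_total ((a : ℕ∞)) ((s.map ((↑) : ℕ → ℕ∞)).inf) with hle | hle
      · rw [inf_eq_left.mpr hle] at h
        have : a = 1 := by exact_mod_cast h
        rw [this]
        exact Multiset.mem_cons_self 1 s
      · rw [inf_eq_right.mpr hle] at h
        exact Multiset.mem_cons_of_mem (ih (by rw [sMin]; exact h))

/-! ### The "decrement" operation and its properties -/

/-- Decrement every part by one and delete the resulting zero parts. -/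
def Dm (X : Multiset ℕ) : Multiset ℕ := (X.map (· - 1)).filter (· ≠ 0)

lemma Dm_card_le (X : Multiset ℕ) : Multiset.card (Dm X) ≤ Multiset.card X := by
  calc Multiset.card (Dm X) ≤ Multiset.card (X.map (· - 1)) :=
        Multiset.card_le_card (Multiset.filter_le _ _)
    _ = Multiset.card X := Multiset.card_map _ _

lemma Dm_zero : Dm 0 = 0 := by simp [Dm]

lemma Dm_cons_one (X : Multiset ℕ) : Dm (1 ::ₘ X) = Dm X := by
  simp [Dm, Multiset.filter_cons]

lemma Dm_cons {a : ℕ} (X : Multiset ℕ) (h1 : a ≠ 1) (h0 : 0 < a) :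
    Dm (a ::ₘ X) = (a - 1) ::ₘ Dm X := by
  have : a - 1 ≠ 0 := by omega
  simp [Dm, Multiset.filter_cons, this]

lemma Dm_mem_le {X : Multiset ℕ} {k : ℕ} (h : ∀ a ∈ X, a ≤ k) :
    ∀ a ∈ Dm X, a ≠ 0 ∧ a ≤ k - 1 := by
  intro a ha
  rw [Dm, Multiset.mem_filter] at ha
  obtain ⟨ha', hne⟩ := ha
  obtain ⟨b, hb, rfl⟩ := Multiset.mem_map.mp ha'
  exact ⟨hne, by have := h b hb; omega⟩

lemma Dm_sum {X : Multiset ℕ} (h : ∀ a ∈ X, 0 < a) :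
    (Dm X).sum + Multiset.card X = X.sum := by
  induction X using Multiset.induction with
  | empty => simp [Dm]
  | cons a s ih =>
      have ha : 0 < a := h a (Multiset.mem_cons_self a s)
      have hs : ∀ b ∈ s, 0 < b := fun b hb => h b (Multiset.mem_cons_of_mem hb)
      have ihs := ih hs
      by_cases h1 : a = 1
      · subst h1
        rw [Dm_cons_one]
        simp only [Multiset.sum_cons, Multiset.card_cons]
        omega
      · rw [Dm_cons s h1 ha]
        simp only [Multiset.sum_cons, Multiset.card_cons]
        omega

lemma Dm_rebuild {X : Multiset ℕ} (h : ∀ a ∈ X, 0 < a) :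
    (Dm X).map (· + 1) +
      Multiset.replicate (Multiset.card X - Multiset.card (Dm X)) 1 = X := by
  induction X using Multiset.induction with
  | empty => simp [Dm]
  | cons a s ih =>
      have ha : 0 < a := h a (Multiset.mem_cons_self a s)
      have hs : ∀ b ∈ s, 0 < b := fun b hb => h b (Multiset.mem_cons_of_mem hb)
      have ihs := ih hs
      have hDle := Dm_card_le s
      by_cases h1 : a = 1
      · subst h1
        rw [Dm_cons_one]
        have hcount : Multiset.card (1 ::ₘ s) - Multiset.card (Dm s)
            = (Multiset.card s - Multiset.card (Dm s)) + 1 := by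
          simp only [Multiset.card_cons]; omega
        rw [hcount, Multiset.replicate_succ]
        rw [Multiset.add_cons]
        rw [ihs]
      · rw [Dm_cons s h1 ha]
        have ha1 : a - 1 + 1 = a := by omega
        rw [Multiset.map_cons, ha1]
        have hcount : Multiset.card (a ::ₘ s) - Multiset.card ((a - 1) ::ₘ Dm s)
            = Multiset.card s - Multiset.card (Dm s) := by
          simp only [Multiset.card_cons]; omega
        rw [hcount, Multiset.cons_add, ihs]

lemma Dm_grow {δ : Multiset ℕ} (h : ∀ a ∈ δ, 0 < a) (p : ℕ) :
    Dm (δ.map (· + 1) + Multiset.replicate p 1) = δ := by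
  rw [Dm, Multiset.map_add, Multiset.map_map, Multiset.map_replicate]
  have h1 : δ.map ((· - 1) ∘ (· + 1)) = δ := by
    have : δ.map ((· - 1) ∘ (· + 1)) = δ.map id :=
      Multiset.map_congr rfl (fun a _ => by simp)
    simp only [Multiset.map_id] at this
    exact this
  rw [h1]
  rw [Multiset.filter_add]
  have h2 : Multiset.filter (· ≠ 0) δ = δ :=
    Multiset.filter_eq_self.mpr (fun a ha => by have := h a ha; omega)
  have h3 : Multiset.filter (· ≠ 0) (Multiset.replicate p (1 - 1)) = 0 :=
    Multiset.filter_eq_nil.mpr (fun a ha => by rw [Multiset.eq_of_mem_replicate ha]; simp)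
  rw [h2, h3, add_zero]

lemma sum_map_succ (X : Multiset ℕ) :
    (X.map (· + 1)).sum = X.sum + Multiset.card X := by
  induction X using Multiset.induction with
  | empty => simp
  | cons a s ih =>
      simp only [Multiset.map_cons, Multiset.sum_cons, Multiset.card_cons, ih]
      omega

/-! ### The forward and backward maps -/

/-- The forward map `Q₃(m,n) → P₃(-m,n)`. -/
def Fm (m : ℕ) (x : ℕ × Multiset ℕ × Multiset ℕ) : ℕ × Multiset ℕ × Multiset ℕ :=
  (x.1 + 1,
   (x.2.1.erase (m + x.1)).map (· + 1) +
     Multiset.replicate ((Multiset.card x.2.2 - 2) - (Multiset.card x.2.1 - 1)) 1,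
   Dm ((x.2.2.erase x.1).erase 1))

/-- The backward map `P₃(-m,n) → Q₃(m,n)`. -/
def Gm (m : ℕ) (x : ℕ × Multiset ℕ × Multiset ℕ) : ℕ × Multiset ℕ × Multiset ℕ :=
  (x.1 - 1,
   (m + (x.1 - 1)) ::ₘ Dm x.2.1,
   (x.1 - 1) ::ₘ 1 ::ₘ (x.2.2.map (· + 1) +
     Multiset.replicate (Multiset.card x.2.1 - Multiset.card x.2.2) 1))

/-- Structural decomposition of an element of `Q₃`. -/
lemma Q3_decomp {m n j : ℕ} {α β : Multiset ℕ} (hx : (j, α, β) ∈ Q3 m n) :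
    α = (m + j) ::ₘ α.erase (m + j) ∧ β = j ::ₘ 1 ::ₘ (β.erase j).erase 1 := by
  obtain ⟨hj, hαpos, hβpos, hαle, hβle, hsum, hβ1, hcard, hα1, hmin⟩ := hx
  simp only at hj hαpos hβpos hαle hβle hsum hβ1 hcard hα1 hmin
  have hαne : α ≠ 0 := by
    intro h; rw [h, partAt_zero_one] at hα1; omega
  have hmjα : m + j ∈ α := by
    have := partAt_one_mem hαne; rwa [hα1] at this
  have hβne : β ≠ 0 := by
    intro h; rw [h, partAt_zero_one] at hβ1; omega
  have hjβ : j ∈ β := by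
    have := partAt_one_mem hβne; rwa [hβ1] at this
  have h1β : 1 ∈ β := one_mem_of_sMin_eq_one hmin
  have h1B : 1 ∈ β.erase j := by
    by_cases hj1 : j = 1
    · subst hj1
      have hcβ : 2 ≤ Multiset.card β := by
        have : 0 < Multiset.card α := Multiset.card_pos.mpr hαne
        omega
      have hpos : 0 < Multiset.card (β.erase 1) := by
        rw [Multiset.card_erase_of_mem h1β, Nat.pred_eq_sub_one]; omega
      obtain ⟨a, ha⟩ := Multiset.card_pos_iff_exists_mem.mp hpos
      have haβ : a ∈ β := Multiset.mem_of_mem_erase ha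
      have := hβle a haβ
      have := hβpos a haβ
      have : a = 1 := by omega
      rwa [this] at ha
    · exact (Multiset.mem_erase_of_ne (by omega)).mpr h1β
  exact ⟨(Multiset.cons_erase hmjα).symm,
    by rw [Multiset.cons_erase h1B, Multiset.cons_erase hjβ]⟩

lemma Fm_mapsTo {m n : ℕ} {x : ℕ × Multiset ℕ × Multiset ℕ} (hx : x ∈ Q3 m n) :
    Fm m x ∈ P3 m n := by
  obtain ⟨j, α, β⟩ := x
  obtain ⟨hA', hB'⟩ := Q3_decomp hx
  obtain ⟨hj, hαpos, hβpos, hαle, hβle, hsum, hβ1, hcard, hα1, hmin⟩ := hx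
  simp only at hj hαpos hβpos hαle hβle hsum hβ1 hcard hα1 hmin
  simp only [Fm, P3, Set.mem_setOf_eq]
  set A := α.erase (m + j) with hAdef
  set B := (β.erase j).erase 1 with hBdef
  have hApos : ∀ a ∈ A, 0 < a := fun a ha => hαpos a (Multiset.mem_of_mem_erase ha)
  have hAle : ∀ a ∈ A, a ≤ m + j := fun a ha => hαle a (Multiset.mem_of_mem_erase ha)
  have hBpos : ∀ a ∈ B, 0 < a := fun a ha =>
    hβpos a (Multiset.mem_of_mem_erase (Multiset.mem_of_mem_erase ha))
  have hBle : ∀ a ∈ B, a ≤ j := fun a ha =>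
    hβle a (Multiset.mem_of_mem_erase (Multiset.mem_of_mem_erase ha))
  have hcardα : Multiset.card α = Multiset.card A + 1 := by
    rw [hA']; simp
  have hcardβ : Multiset.card β = Multiset.card B + 2 := by
    rw [hB']; simp
  have hsumα : α.sum = (m + j) + A.sum := by rw [hA']; simp
  have hsumβ : β.sum = j + 1 + B.sum := by
    rw [hB', Multiset.sum_cons, Multiset.sum_cons]; ring
  have hAB : Multiset.card A ≤ Multiset.card B := by omega
  have hpad : (Multiset.card β - 2) - (Multiset.card α - 1)
      = Multiset.card B - Multiset.card A := by omega
  rw [hpad]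
  have hDB := Dm_sum hBpos
  have hDBcard := Dm_card_le B
  have hsuccA := sum_map_succ A
  have hγcard : Multiset.card (A.map (· + 1) +
      Multiset.replicate (Multiset.card B - Multiset.card A) 1)
      = Multiset.card B := by
    simp [Multiset.card_add, Multiset.card_replicate]; omega
  refine ⟨by omega, ?_, ?_, ?_, ?_, ?_, ?_, ?_⟩
  · intro a ha
    rcases Multiset.mem_add.mp ha with h | h
    · obtain ⟨b, _, rfl⟩ := Multiset.mem_map.mp h; omega
    · rw [Multiset.eq_of_mem_replicate h]; omega
  · intro a ha
    have := (Dm_mem_le hBle) a ha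
    omega
  · intro a ha
    rcases Multiset.mem_add.mp ha with h | h
    · obtain ⟨b, hb, rfl⟩ := Multiset.mem_map.mp h
      have := hAle b hb; omega
    · rw [Multiset.eq_of_mem_replicate h]; omega
  · intro a ha
    have := (Dm_mem_le hBle) a ha
    omega
  · -- sum condition
    have hsr : (Multiset.replicate (Multiset.card B - Multiset.card A) 1).sum
        = Multiset.card B - Multiset.card A := by
      simp [Multiset.sum_replicate]
    rw [Multiset.sum_add, hsuccA, hsr]
    have hprod : (j + 1) * (m + (j + 1)) = j * (m + j) + m + 2 * j + 1 := by ring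
    omega
  · rw [hγcard]; exact Dm_card_le B
  · have h1 : partAt (Dm B) 1 ≤ j - 1 := by
      apply partAt_one_le
      intro a ha
      have := (Dm_mem_le hBle) a ha
      omega
    omega

lemma Gm_mapsTo {m n : ℕ} {x : ℕ × Multiset ℕ × Multiset ℕ} (hx : x ∈ P3 m n) :
    Gm m x ∈ Q3 m n := by
  obtain ⟨j', γ, δ⟩ := x
  obtain ⟨hj', hγpos, hδpos, hγle, hδle, hsum, hcardle, hδ1⟩ := hx
  simp only at hj' hγpos hδpos hγle hδle hsum hcardle hδ1
  obtain ⟨j, rfl⟩ : ∃ k, j' = k + 1 := ⟨j' - 1, by omega⟩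
  have hδbd : ∀ b ∈ δ, b + 2 ≤ j + 1 := by
    intro b hb
    have h1 : (b : ℤ) ≤ (partAt δ 1 : ℤ) := by exact_mod_cast le_partAt_one hb
    omega
  have hDγ := Dm_sum hγpos
  have hDγcard := Dm_card_le γ
  have hDγle := Dm_mem_le hγle
  have hsuccδ := sum_map_succ δ
  simp only [Gm, Q3, Set.mem_setOf_eq, Nat.add_sub_cancel]
  refine ⟨by omega, ?_, ?_, ?_, ?_, ?_, ?_, ?_, ?_, ?_⟩
  · intro a ha
    rcases Multiset.mem_cons.mp ha with h | h
    · omega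
    · have := (hDγle a h).1; omega
  · intro a ha
    rcases Multiset.mem_cons.mp ha with h | h
    · omega
    rcases Multiset.mem_cons.mp h with h | h
    · omega
    rcases Multiset.mem_add.mp h with h | h
    · obtain ⟨b, _, rfl⟩ := Multiset.mem_map.mp h; omega
    · rw [Multiset.eq_of_mem_replicate h]; omega
  · intro a ha
    rcases Multiset.mem_cons.mp ha with h | h
    · omega
    · have := (hDγle a h).2; omega
  · intro a ha
    rcases Multiset.mem_cons.mp ha with h | h
    · omega
    rcases Multiset.mem_cons.mp h with h | h
    · omega
    rcases Multiset.mem_add.mp h with h | h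
    · obtain ⟨b, hb, rfl⟩ := Multiset.mem_map.mp h
      have := hδbd b hb; omega
    · rw [Multiset.eq_of_mem_replicate h]; omega
  · -- sum condition
    simp only [Multiset.sum_cons, Multiset.sum_add, hsuccδ, Multiset.sum_replicate,
      smul_eq_mul, mul_one]
    have hprod : (j + 1) * (m + (j + 1)) = j * (m + j) + m + 2 * j + 1 := by ring
    omega
  · -- partAt β 1 = j
    apply partAt_one_eq (Multiset.mem_cons_self _ _)
    intro a ha
    rcases Multiset.mem_cons.mp ha with h | h
    · omega
    rcases Multiset.mem_cons.mp h with h | h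
    · omega
    rcases Multiset.mem_add.mp h with h | h
    · obtain ⟨b, hb, rfl⟩ := Multiset.mem_map.mp h
      have := hδbd b hb; omega
    · rw [Multiset.eq_of_mem_replicate h]; omega
  · -- card condition
    simp only [Multiset.card_cons, Multiset.card_add, Multiset.card_map,
      Multiset.card_replicate]
    omega
  · -- partAt α 1 = m + j
    apply partAt_one_eq (Multiset.mem_cons_self _ _)
    intro a ha
    rcases Multiset.mem_cons.mp ha with h | h
    · omega
    · have := (hDγle a h).2; omega
  · -- sMin β = 1
    apply sMin_eq_one
    · exact Multiset.mem_cons_of_mem (Multiset.mem_cons_self _ _)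
    · intro a ha
      rcases Multiset.mem_cons.mp ha with h | h
      · omega
      rcases Multiset.mem_cons.mp h with h | h
      · omega
      rcases Multiset.mem_add.mp h with h | h
      · obtain ⟨b, _, rfl⟩ := Multiset.mem_map.mp h; omega
      · rw [Multiset.eq_of_mem_replicate h]; omega

lemma Gm_Fm {m n : ℕ} {x : ℕ × Multiset ℕ × Multiset ℕ} (hx : x ∈ Q3 m n) :
    Gm m (Fm m x) = x := by
  obtain ⟨j, α, β⟩ := x
  obtain ⟨hA', hB'⟩ := Q3_decomp hx
  obtain ⟨hj, hαpos, hβpos, hαle, hβle, hsum, hβ1, hcard, hα1, hmin⟩ := hx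
  simp only at hj hαpos hβpos hαle hβle hsum hβ1 hcard hα1 hmin
  simp only [Fm, Gm, Prod.mk.injEq, Nat.add_sub_cancel]
  set A := α.erase (m + j) with hAdef
  set B := (β.erase j).erase 1 with hBdef
  have hApos : ∀ a ∈ A, 0 < a := fun a ha => hαpos a (Multiset.mem_of_mem_erase ha)
  have hBpos : ∀ a ∈ B, 0 < a := fun a ha =>
    hβpos a (Multiset.mem_of_mem_erase (Multiset.mem_of_mem_erase ha))
  have hcardα : Multiset.card α = Multiset.card A + 1 := by rw [hA']; simp
  have hcardβ : Multiset.card β = Multiset.card B + 2 := by rw [hB']; simp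
  have hpad : (Multiset.card β - 2) - (Multiset.card α - 1)
      = Multiset.card B - Multiset.card A := by omega
  have hAB : Multiset.card A ≤ Multiset.card B := by omega
  rw [hpad]
  have hγcard : Multiset.card (A.map (· + 1) +
      Multiset.replicate (Multiset.card B - Multiset.card A) 1)
      = Multiset.card B := by
    simp [Multiset.card_add, Multiset.card_replicate]; omega
  refine ⟨trivial, ?_, ?_⟩
  · rw [Dm_grow hApos]
    exact hA'.symm
  · rw [hγcard, Dm_rebuild hBpos]
    exact hB'.symm

lemma Fm_Gm {m n : ℕ} {x : ℕ × Multiset ℕ × Multiset ℕ} (hx : x ∈ P3 m n) :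
    Fm m (Gm m x) = x := by
  obtain ⟨j', γ, δ⟩ := x
  obtain ⟨hj', hγpos, hδpos, hγle, hδle, hsum, hcardle, hδ1⟩ := hx
  simp only at hj' hγpos hδpos hγle hδle hsum hcardle hδ1
  obtain ⟨j, rfl⟩ : ∃ k, j' = k + 1 := ⟨j' - 1, by omega⟩
  have hDγcard := Dm_card_le γ
  simp only [Fm, Gm, Prod.mk.injEq, Nat.add_sub_cancel]
  refine ⟨trivial, ?_, ?_⟩
  · -- second component
    rw [Multiset.erase_cons_head]
    have hcnt : Multiset.card (j ::ₘ 1 ::ₘ (δ.map (· + 1) +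
        Multiset.replicate (Multiset.card γ - Multiset.card δ) 1)) - 2 -
        (Multiset.card ((m + j) ::ₘ Dm γ) - 1)
        = Multiset.card γ - Multiset.card (Dm γ) := by
      simp only [Multiset.card_cons, Multiset.card_add, Multiset.card_map,
        Multiset.card_replicate]
      omega
    rw [hcnt]
    exact Dm_rebuild hγpos
  · -- third component
    rw [Multiset.erase_cons_head, Multiset.erase_cons_head]
    exact Dm_grow hδpos _

/-- For all integers m ≥ 0 and n ≥ 0, #Q₃(m,n) = #P₃(-m,n). -/
theorem Q3_card_eq_P3_card (m n : ℕ) : Nat.card (Q3 m n) = Nat.card (P3 m n) := by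
  apply Nat.card_congr
  exact
    { toFun := fun x => ⟨Fm m x.1, Fm_mapsTo x.2⟩
      invFun := fun y => ⟨Gm m y.1, Gm_mapsTo y.2⟩
      left_inv := fun x => Subtype.ext (Gm_Fm x.2)
      right_inv := fun y => Subtype.ext (Fm_Gm y.2) }
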